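/- arXiv:1504.03473 — 3 statements merged into one kernel-verified Lean document; each statement's English description precedes it below -/
import Mathlib

section
/- Let p, q be states of MIAs with p ⊑ q (MIA-refinement), where p is input-enabled. For every suspension trace σ ∈ (I ∪ O ∪ {δ_must})*, if p after_must σ is nonempty, then for every q' ∈ q after_must σ there exists p' ∈ p after_must σ with p' ⊑ q'. -/
/-- A path through a labeled step relation. -/
def TrPath {S L : Type} (step : S → L → S → Prop) : S → List L → S → Prop
  | p, [], q => q = p
  | p, a :: σ, q => ∃ r, step p a r ∧ TrPath step r σ q

/-- A Modal Interface Automaton over states `S`, actions `A`, with inputs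
identified by the predicate `inp` (outputs are the non-inputs). -/
structure MIA (S A : Type) (inp : A → Prop) where
  must : S → A → S → Prop
  may : S → A → S → Prop
  consistent : ∀ p a q, must p a q → may p a q
  inputDet : ∀ p a q q', inp a → must p a q → must p a q' → q = q'
  mayInpMust : ∀ p a q, inp a → may p a q → must p a q

namespace MIA

variable {S A : Type} {inp : A → Prop}

def initMust (M : MIA S A inp) (p : S) : Set A := {a | ∃ q, M.must p a q}

def initMay (M : MIA S A inp) (p : S) : Set A := {a | ∃ q, M.may p a q}

/-- may-quiescence δ_may : `init_must(p) ⊆ I`. -/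
def qMay (M : MIA S A inp) (p : S) : Prop := M.initMust p ⊆ {a | inp a}

/-- must-quiescence δ_must : `init_may(p) ⊆ I`. -/
def qMust (M : MIA S A inp) (p : S) : Prop := M.initMay p ⊆ {a | inp a}

/-- may-transitions extended with δ-self-loops at may-quiescent states
    (δ is encoded as `none`). -/
def mayStep (M : MIA S A inp) (p : S) (x : Option A) (q : S) : Prop :=
  match x with
  | some a => M.may p a q
  | none => q = p ∧ M.qMay p

/-- must-transitions extended with δ-self-loops at must-quiescent states. -/
def mustStep (M : MIA S A inp) (p : S) (x : Option A) (q : S) : Prop :=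
  match x with
  | some a => M.must p a q
  | none => q = p ∧ M.qMust p

def afterMay (M : MIA S A inp) (p : S) (σ : List (Option A)) : Set S :=
  {q | TrPath M.mayStep p σ q}

def afterMust (M : MIA S A inp) (p : S) (σ : List (Option A)) : Set S :=
  {q | TrPath M.mustStep p σ q}

def StracesMay (M : MIA S A inp) (p : S) : Set (List (Option A)) :=
  {σ | ∃ q, TrPath M.mayStep p σ q}

def StracesMust (M : MIA S A inp) (p : S) : Set (List (Option A)) :=
  {σ | ∃ q, TrPath M.mustStep p σ q}

/-- `Out_may(P)`: may-enabled outputs of states in `P`, plus `δ` (= `none`)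
    if some state of `P` is may-quiescent. -/
def OutMay (M : MIA S A inp) (P : Set S) : Set (Option A) :=
  {x | (∃ a, x = some a ∧ ¬ inp a ∧ ∃ p ∈ P, ∃ q, M.may p a q) ∨
       (x = none ∧ ∃ p ∈ P, M.qMay p)}

def OutMust (M : MIA S A inp) (P : Set S) : Set (Option A) :=
  {x | (∃ a, x = some a ∧ ¬ inp a ∧ ∃ p ∈ P, ∃ q, M.must p a q) ∨
       (x = none ∧ ∃ p ∈ P, M.qMust p)}

/-- Every state has a must-transition for every input. -/
def inputEnabled (M : MIA S A inp) : Prop := ∀ p a, inp a → ∃ q, M.must p a q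

end MIA

/-- MIA-refinement (alternating simulation), stated for raw transition
    relations so that it also applies to IOLTS viewed as MIAs. -/
def IsRefinement {S T A : Type} (inp : A → Prop)
    (must₁ may₁ : S → A → S → Prop) (must₂ may₂ : T → A → T → Prop)
    (R : S → T → Prop) : Prop :=
  ∀ p q, R p q →
    (∀ a q', must₂ q a q' → ∃ p', must₁ p a p' ∧ R p' q') ∧
    (∀ a p', ¬ inp a → may₁ p a p' → ∃ q', may₂ q a q' ∧ R p' q')

/-- `p ⊑ q` : `p` MIA-refines `q`. -/
def MIARef {S T A : Type} {inp : A → Prop} (M : MIA S A inp) (N : MIA T A inp)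
    (p : S) (q : T) : Prop :=
  ∃ R, IsRefinement inp M.must M.may N.must N.may R ∧ R p q

/-- `p ≤_var q` : the IOLTS `(T, I, O, tr)` state `p` is a variant of the MIA
    state `q`; the IOLTS is viewed as the MIA with must = may = tr, and its
    transition relation is contained in the may-relation of `N`. -/
def Variant {T A : Type} {inp : A → Prop} (tr : T → A → T → Prop)
    (N : MIA T A inp) (p q : T) : Prop :=
  (∃ R, IsRefinement inp tr tr N.must N.may R ∧ R p q) ∧
  ∀ s a t, tr s a t → N.may s a t

section IOLTS

variable {S T A : Type}

/-- quiescence of an IOLTS state: only inputs enabled. -/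
def ltsQuiescent (inp : A → Prop) (tr : S → A → S → Prop) (p : S) : Prop :=
  ∀ a q, tr p a q → inp a

/-- IOLTS transitions extended with δ-self-loops at quiescent states. -/
def ltsStep (inp : A → Prop) (tr : S → A → S → Prop)
    (p : S) (x : Option A) (q : S) : Prop :=
  match x with
  | some a => tr p a q
  | none => q = p ∧ ltsQuiescent inp tr p

def ltsAfter (inp : A → Prop) (tr : S → A → S → Prop) (p : S)
    (σ : List (Option A)) : Set S :=
  {q | TrPath (ltsStep inp tr) p σ q}

def ltsStraces (inp : A → Prop) (tr : S → A → S → Prop) (p : S) :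
    Set (List (Option A)) :=
  {σ | ∃ q, TrPath (ltsStep inp tr) p σ q}

def ltsOut (inp : A → Prop) (tr : S → A → S → Prop) (P : Set S) :
    Set (Option A) :=
  {x | (∃ a, x = some a ∧ ¬ inp a ∧ ∃ p ∈ P, ∃ q, tr p a q) ∨
       (x = none ∧ ∃ p ∈ P, ltsQuiescent inp tr p)}

/-- classical input/output conformance between IOLTS states. -/
def ioco (inp : A → Prop) (tri : S → A → S → Prop) (trs : T → A → T → Prop)
    (i : S) (s : T) : Prop :=
  ∀ σ ∈ ltsStraces inp trs s,
    ltsOut inp tri (ltsAfter inp tri i σ) ⊆ ltsOut inp trs (ltsAfter inp trs s σ)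

end IOLTS

/-- modal input/output conformance. -/
def mioco {S T A : Type} {inp : A → Prop} (M : MIA S A inp) (N : MIA T A inp)
    (i : S) (s : T) : Prop :=
  (∀ σ ∈ N.StracesMay s, M.OutMay (M.afterMay i σ) ⊆ N.OutMay (N.afterMay s σ)) ∧
  (∀ σ ∈ M.StracesMust i, N.OutMust (N.afterMust s σ) ⊆ M.OutMust (M.afterMust i σ))

/-- if `p ⊑ q` with `p` input-enabled, then for every suspension
trace `σ`, whenever `p after_must σ ≠ ∅`, every `q' ∈ q after_must σ` has
some `p' ∈ p after_must σ` with `p' ⊑ q'`. -/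
theorem stmt7 {S T A : Type} {inp : A → Prop} (M : MIA S A inp)
    (N : MIA T A inp) (p : S) (q : T) (h : MIARef M N p q)
    (hie : M.inputEnabled)
    (σ : List (Option A)) (hne : (M.afterMust p σ).Nonempty) :
    ∀ q' ∈ N.afterMust q σ, ∃ p' ∈ M.afterMust p σ, MIARef M N p' q' := by
  clear hne hie
  obtain ⟨R, hR, hpq⟩ := h
  suffices h : ∀ (σ : List (Option A)) (p : S) (q : T), R p q →
      ∀ q' ∈ N.afterMust q σ, ∃ p' ∈ M.afterMust p σ, R p' q' by
    intro q' hq'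
    obtain ⟨p', hp', hR'⟩ := h σ p q hpq q' hq'
    exact ⟨p', hp', R, hR, hR'⟩
  intro σ
  induction σ with
  | nil => intro p q hpq q' hq'; cases hq'; exact ⟨p, rfl, hpq⟩
  | cons x σ ih =>
    intro p q hpq q' hq'
    obtain ⟨r, hstep, hpath⟩ := hq'
    match x with
    | some a =>
      obtain ⟨p'', hmust, hR''⟩ := (hR p q hpq).1 a r hstep
      obtain ⟨p', hp', hR'⟩ := ih p'' r hR'' q' hpath
      exact ⟨p', ⟨p'', hmust, hp'⟩, hR'⟩
    | none =>
      obtain ⟨heq, hq⟩ := hstep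
      subst heq
      have hqp : M.qMust p := by
        intro a ⟨p1, hmay⟩
        by_contra hna
        obtain ⟨q1, hmay2, -⟩ := (hR p _ hpq).2 a p1 hna hmay
        exact hna (hq ⟨q1, hmay2⟩)
      obtain ⟨p', hp', hR'⟩ := ih p _ hpq q' hpath
      exact ⟨p', ⟨p, ⟨rfl, hqp⟩, hp'⟩, hR'⟩
end

section
/- MIA-refinement preserves modal I/O-conformance: let s, i be states of MIAs over common I, O, with i input-enabled, and suppose i mioco s. Then for every i' with i' ⊑ i (MIA-refinement), i' mioco s. -/
section auxlemmas

variable {S S' T A : Type} {inp : A → Prop}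

lemma trpath_snoc {S L : Type} (step : S → L → S → Prop) (x : L) :
    ∀ (σ : List L) (p q : S),
    TrPath step p (σ ++ [x]) q ↔ ∃ r, TrPath step p σ r ∧ step r x q := by
  intro σ
  induction σ with
  | nil =>
    intro p q
    constructor
    · rintro ⟨r, hs, hr⟩
      exact ⟨p, rfl, by cases hr; exact hs⟩
    · rintro ⟨r, hr, hs⟩
      cases hr
      exact ⟨q, hs, rfl⟩
  | cons a σ ih =>
    intro p q
    constructor
    · rintro ⟨r, hs, hp⟩
      obtain ⟨r', hr', hs'⟩ := (ih r q).mp hp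
      exact ⟨r', ⟨r, hs, hr'⟩, hs'⟩
    · rintro ⟨r, ⟨r', hs, hp⟩, hs'⟩
      exact ⟨r', hs, (ih r' q).mpr ⟨r, hp, hs'⟩⟩

variable {M' : MIA S' A inp} {M : MIA S A inp}
variable {R : S' → S → Prop}

lemma ref_qMay (hR : IsRefinement inp M'.must M'.may M.must M.may R)
    {p : S'} {q : S} (hpq : R p q) (hq : M'.qMay p) : M.qMay q := by
  rintro a ⟨q', hmust⟩
  obtain ⟨p', hp', -⟩ := (hR p q hpq).1 a q' hmust
  exact hq ⟨p', hp'⟩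

lemma ref_qMust (hR : IsRefinement inp M'.must M'.may M.must M.may R)
    {p : S'} {q : S} (hpq : R p q) (hq : M.qMust q) : M'.qMust p := by
  rintro a ⟨p', hmay⟩
  by_contra hni
  obtain ⟨q', hq', -⟩ := (hR p q hpq).2 a p' hni hmay
  exact hni (hq ⟨q', hq'⟩)

/-- Lift may-paths of the refining state to may-paths of the refined one. -/
lemma ref_mayPath (hR : IsRefinement inp M'.must M'.may M.must M.may R)
    (hie : M.inputEnabled) :
    ∀ (σ : List (Option A)) {p : S'} {q : S}, R p q →
      ∀ {p₁ : S'}, TrPath M'.mayStep p σ p₁ →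
      ∃ q₁, TrPath M.mayStep q σ q₁ ∧ R p₁ q₁ := by
  intro σ
  induction σ with
  | nil => rintro p q hpq p₁ rfl; exact ⟨q, rfl, hpq⟩
  | cons x σ ih =>
    rintro p q hpq p₁ ⟨r, hs, hp⟩
    cases x with
    | none =>
      obtain ⟨rfl, hq⟩ := hs
      obtain ⟨q₁, hpath, h₁⟩ := ih hpq hp
      exact ⟨q₁, ⟨q, ⟨rfl, ref_qMay hR hpq hq⟩, hpath⟩, h₁⟩
    | some a =>
      by_cases hi : inp a
      · have hmust : M'.must p a r := M'.mayInpMust p a r hi hs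
        obtain ⟨q', hq'⟩ := hie q a hi
        obtain ⟨p', hp', hR'⟩ := (hR p q hpq).1 a q' hq'
        have : p' = r := M'.inputDet p a p' r hi hp' hmust
        subst this
        obtain ⟨q₁, hpath, h₁⟩ := ih hR' hp
        exact ⟨q₁, ⟨q', M.consistent q a q' hq', hpath⟩, h₁⟩
      · obtain ⟨q', hq', hR'⟩ := (hR p q hpq).2 a r hi hs
        obtain ⟨q₁, hpath, h₁⟩ := ih hR' hp
        exact ⟨q₁, ⟨q', hq', hpath⟩, h₁⟩

/-- Simulate must-paths of the refined state by the refining one. -/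
lemma ref_mustPath (hR : IsRefinement inp M'.must M'.may M.must M.may R) :
    ∀ (σ : List (Option A)) {p : S'} {q : S}, R p q →
      ∀ {q₁ : S}, TrPath M.mustStep q σ q₁ →
      ∃ p₁, TrPath M'.mustStep p σ p₁ ∧ R p₁ q₁ := by
  intro σ
  induction σ with
  | nil => rintro p q hpq q₁ rfl; exact ⟨p, rfl, hpq⟩
  | cons x σ ih =>
    rintro p q hpq q₁ ⟨r, hs, hq⟩
    cases x with
    | none =>
      obtain ⟨rfl, hqui⟩ := hs
      obtain ⟨p₁, hpath, h₁⟩ := ih hpq hq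
      exact ⟨p₁, ⟨p, ⟨rfl, ref_qMust hR hpq hqui⟩, hpath⟩, h₁⟩
    | some a =>
      obtain ⟨p', hp', hR'⟩ := (hR p q hpq).1 a r hs
      obtain ⟨p₁, hpath, h₁⟩ := ih hR' hq
      exact ⟨p₁, ⟨p', hp', hpath⟩, h₁⟩

/-- Every must-trace of `s` is a must-trace of the input-enabled `i`. -/
lemma straces_must_sub {N : MIA T A inp} {i : S} {s : T}
    (hie : M.inputEnabled)
    (h2 : ∀ σ ∈ M.StracesMust i,
      N.OutMust (N.afterMust s σ) ⊆ M.OutMust (M.afterMust i σ)) :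
    ∀ σ ∈ N.StracesMust s, σ ∈ M.StracesMust i := by
  intro σ
  induction σ using List.reverseRecOn with
  | nil => exact fun _ => ⟨i, rfl⟩
  | append_singleton σ x ih =>
    rintro ⟨t, ht⟩
    obtain ⟨t₀, ht₀, hst⟩ := (trpath_snoc _ x σ s t).mp ht
    have hσ : σ ∈ M.StracesMust i := ih ⟨t₀, ht₀⟩
    cases x with
    | none =>
      obtain ⟨heq, hqui⟩ := hst
      have hx : (none : Option A) ∈ N.OutMust (N.afterMust s σ) :=
        Or.inr ⟨rfl, t₀, ht₀, hqui⟩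
      obtain hout := h2 σ hσ hx
      rcases hout with ⟨a, ha, -⟩ | ⟨-, p, hp, hq⟩
      · exact absurd ha (by simp)
      · exact ⟨p, (trpath_snoc _ _ σ i p).mpr ⟨p, hp, rfl, hq⟩⟩
    | some a =>
      by_cases hi : inp a
      · obtain ⟨q, hq⟩ := hσ
        obtain ⟨q', hq'⟩ := hie q a hi
        exact ⟨q', (trpath_snoc _ _ σ i q').mpr ⟨q, hq, hq'⟩⟩
      · have hx : (some a : Option A) ∈ N.OutMust (N.afterMust s σ) :=
          Or.inl ⟨a, rfl, hi, t₀, ht₀, t, hst⟩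
        obtain hout := h2 σ hσ hx
        rcases hout with ⟨a', ha', -, p, hp, q', hq'⟩ | ⟨ha, -⟩
        · cases ha'
          exact ⟨q', (trpath_snoc _ _ σ i q').mpr ⟨p, hp, hq'⟩⟩
        · exact absurd ha (by simp)

end auxlemmas

/-- MIA-refinement preserves modal I/O-conformance: if `i` is
input-enabled and `i mioco s`, then every `i' ⊑ i` satisfies `i' mioco s`. -/
theorem stmt9 {S S' T A : Type} {inp : A → Prop} (M : MIA S A inp)
    (M' : MIA S' A inp) (N : MIA T A inp) (i : S) (s : T)
    (hie : M.inputEnabled) (h : mioco M N i s) :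
    ∀ i' : S', MIARef M' M i' i → mioco M' N i' s := by
  rintro i' ⟨R, hR, hRi⟩
  constructor
  · intro σ hσ x hx
    apply h.1 σ hσ
    rcases hx with ⟨a, rfl, hni, p, hp, q, hq⟩ | ⟨rfl, p, hp, hq⟩
    · obtain ⟨q₁, hpath, h₁⟩ := ref_mayPath hR hie σ hRi hp
      obtain ⟨q', hq', -⟩ := (hR p q₁ h₁).2 a q hni hq
      exact Or.inl ⟨a, rfl, hni, q₁, hpath, q', hq'⟩
    · obtain ⟨q₁, hpath, h₁⟩ := ref_mayPath hR hie σ hRi hp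
      exact Or.inr ⟨rfl, q₁, hpath, ref_qMay hR h₁ hq⟩
  · intro σ hσ' x hx
    have hσs : σ ∈ N.StracesMust s := by
      rcases hx with ⟨a, -, -, t, ht, -⟩ | ⟨-, t, ht, -⟩ <;> exact ⟨t, ht⟩
    have hσi : σ ∈ M.StracesMust i := straces_must_sub hie h.2 σ hσs
    have hout := h.2 σ hσi hx
    rcases hout with ⟨a, rfl, hni, q, hq, q', hq'⟩ | ⟨rfl, q, hq, hqui⟩
    · obtain ⟨p₁, hpath, h₁⟩ := ref_mustPath hR σ hRi hq
      obtain ⟨p', hp', -⟩ := (hR p₁ q h₁).1 a q' hq'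
      exact Or.inl ⟨a, rfl, hni, p₁, hpath, p', hp'⟩
    · obtain ⟨p₁, hpath, h₁⟩ := ref_mustPath hR σ hRi hq
      exact Or.inr ⟨rfl, p₁, hpath, ref_qMust hR h₁ hqui⟩
end

section
/- Completeness fails without the refinement assumption: there exist MIAs i and s over the same alphabets (with i input-enabled after angelic completion, or with empty input alphabet) such that every IOLTS variant i' ≤_var i satisfies i' ioco T(s), yet i mioco s does not hold. Concretely, take I = ∅, O = {a, b}, s with initial state having must-transitions on both !a and !b to distinct terminal states, and i identical except the !b-transition is only a may-transition (not must). -/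
section Stmt16Aux

/-- may-relation of both automata: `0 —a→ 1`, `0 —b→ 2`. -/
def mayR : Fin 3 → Bool → Fin 3 → Prop :=
  fun p a q => p = 0 ∧ ((a = false ∧ q = 1) ∨ (a = true ∧ q = 2))

/-- must-relation of the implementation: only `0 —a→ 1`. -/
def mustR : Fin 3 → Bool → Fin 3 → Prop :=
  fun p a q => p = 0 ∧ a = false ∧ q = 1

def Mex : MIA (Fin 3) Bool (fun _ => False) where
  must := mustR
  may := mayR
  consistent := by rintro p a q ⟨h1, h2, h3⟩; exact ⟨h1, Or.inl ⟨h2, h3⟩⟩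
  inputDet := fun _ _ _ _ h _ _ => h.elim
  mayInpMust := fun _ _ _ h _ => h.elim

def Nex : MIA (Fin 3) Bool (fun _ => False) where
  must := mayR
  may := mayR
  consistent := fun _ _ _ h => h
  inputDet := fun _ _ _ _ h _ _ => h.elim
  mayInpMust := fun _ _ _ h _ => h.elim

theorem trPath_mono {S L : Type} {s1 s2 : S → L → S → Prop}
    (h : ∀ p a q, s1 p a q → s2 p a q) :
    ∀ (σ : List L) (p q : S), TrPath s1 p σ q → TrPath s2 p σ q := by
  intro σ
  induction σ with
  | nil => intro p q hp; exact hp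
  | cons a σ ih =>
      rintro p q ⟨r, hr, hpath⟩
      exact ⟨r, h _ _ _ hr, ih _ _ hpath⟩

end Stmt16Aux

/-- completeness fails without the refinement assumption: there
exist MIAs `i` and `s` over the same alphabets (here with empty input
alphabet, hence trivially input-enabled) such that every IOLTS variant
`i' ≤_var i` satisfies `i' ioco T(s)`, yet `i mioco s` does not hold. -/
theorem stmt16 :
    ∃ (S A : Type) (inp : A → Prop) (M N : MIA S A inp) (i s : S),
      (∀ a, ¬ inp a) ∧ M.inputEnabled ∧
      (∀ (tr : S → A → S → Prop) (i' : S),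
        Variant tr M i' i → ioco inp tr N.may i' s) ∧
      ¬ mioco M N i s := by
  refine ⟨Fin 3, Bool, fun _ => False, Mex, Nex, 0, 0, fun a h => h,
    fun p a h => h.elim, ?_, ?_⟩
  · -- every variant is ioco-conforming
    rintro tr i' ⟨⟨R, href, hRi⟩, hsub⟩
    -- the refinement forces `i' = 0` and `tr 0 false 1`
    obtain ⟨p', htr, -⟩ := (href i' 0 hRi).1 false 1 ⟨rfl, rfl, rfl⟩
    obtain ⟨hi0, hcase⟩ := hsub i' false p' htr
    subst hi0
    have htr01 : tr 0 false 1 := by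
      rcases hcase with ⟨-, h1⟩ | ⟨h, -⟩
      · rwa [h1] at htr
      · exact absurd h (by simp)
    -- step inclusion: ltsStep tr ⊆ ltsStep mayR
    have hquiet : ∀ p : Fin 3, ltsQuiescent (fun _ => False) tr p →
        ltsQuiescent (fun _ => False) mayR p := by
      intro p hq a r hmay
      rcases hmay with ⟨hp0, -⟩
      subst hp0
      exact hq false 1 htr01
    have hstep : ∀ (p : Fin 3) (x : Option Bool) (q : Fin 3),
        ltsStep (fun _ => False) tr p x q →
        ltsStep (fun _ => False) mayR p x q := by
      intro p x q hx
      match x with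
      | some a => exact hsub p a q hx
      | none => exact ⟨hx.1, hquiet p hx.2⟩
    intro σ _ x hx
    rcases hx with ⟨a, hxa, hna, p, hp, q, hpq⟩ | ⟨hxn, p, hp, hq⟩
    · exact Or.inl ⟨a, hxa, hna, p, trPath_mono hstep σ 0 p hp, q, hsub p a q hpq⟩
    · exact Or.inr ⟨hxn, p, trPath_mono hstep σ 0 p hp, hquiet p hq⟩
  · -- `i mioco s` fails: `!b ∈ Out_must(s after ε)` but not in `Out_must(i after ε)`
    rintro ⟨-, h2⟩
    have hmem : ([] : List (Option Bool)) ∈ Mex.StracesMust 0 := ⟨0, rfl⟩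
    have hb : (some true : Option Bool) ∈ Nex.OutMust (Nex.afterMust 0 []) :=
      Or.inl ⟨true, rfl, not_false, 0, rfl, 2, rfl, Or.inr ⟨rfl, rfl⟩⟩
    have := h2 [] hmem hb
    rcases this with ⟨a, ha, -, p, hp, q, hq⟩ | ⟨h, -⟩
    · have hp0 : p = 0 := hp
      rcases hq with ⟨-, haf, -⟩
      have : a = true := by injection ha with h'; exact h'.symm
      simp [this] at haf
    · exact Option.some_ne_none _ h
end
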